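/- arXiv:2210.11450 — 3 statements merged into one kernel-verified Lean document; each statement's English description precedes it below -/
import Mathlib

section
/- Let d ≥ 2, let η > 0, and let 𝒮 be a finite family of nondegenerate d-simplices in ℝ^d whose interiors are pairwise disjoint. Suppose every simplex S ∈ 𝒮 satisfies the regularity condition vol(S) ≥ η · h(S)^d, where vol(S) is the d-dimensional Lebesgue measure of (the convex hull of) S and h(S) is the length of its longest edge. Then for every point γ₀ ∈ ℝ^d, the number of simplices S ∈ 𝒮 with γ₀ ∈ S is at most (1/η) · (2eπ/d)^{d/2}. -/
open MeasureTheory Set Real ENNReal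


lemma gamma_lb {x : ℝ} (hx : 0 < x) : (x / Real.exp 1) ^ x ≤ Real.Gamma (x + 1) := by
  have h0 : Real.Gamma (x + 1) = ∫ t in Ioi (0:ℝ), Real.exp (-t) * t ^ x := by
    rw [Real.Gamma_eq_integral (by linarith)]; simp
  have hint : IntegrableOn (fun t : ℝ => Real.exp (-t) * t ^ x) (Ioi 0) := by
    have := Real.GammaIntegral_convergent (s := x + 1) (by linarith)
    simpa using this
  have h1 : (∫ t in Ioi x, Real.exp (-t) * t ^ x) ≤ ∫ t in Ioi (0:ℝ), Real.exp (-t) * t ^ x := by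
    apply setIntegral_mono_set hint
    · filter_upwards [ae_restrict_mem measurableSet_Ioi] with t ht
      exact mul_nonneg (Real.exp_pos _).le (Real.rpow_nonneg (le_of_lt ht) _)
    · exact HasSubset.Subset.eventuallyLE (Ioi_subset_Ioi hx.le)
  have h2 : (∫ t in Ioi x, Real.exp (-t) * x ^ x) ≤ ∫ t in Ioi x, Real.exp (-t) * t ^ x := by
    apply setIntegral_mono_on
    · exact ((exp_neg_integrableOn_Ioi x one_pos).congr_fun (fun t _ => by ring_nf) measurableSet_Ioi).mul_const _
    · exact hint.mono_set (Ioi_subset_Ioi hx.le)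
    · exact measurableSet_Ioi
    · intro t ht
      exact mul_le_mul_of_nonneg_left (Real.rpow_le_rpow hx.le (le_of_lt ht) hx.le)
        (Real.exp_pos _).le
  have h3 : (∫ t in Ioi x, Real.exp (-t) * x ^ x) = Real.exp (-x) * x ^ x := by
    rw [integral_mul_const, integral_exp_neg_Ioi]
  have h4 : (x / Real.exp 1) ^ x = Real.exp (-x) * x ^ x := by
    rw [Real.div_rpow hx.le (Real.exp_pos 1).le, Real.exp_one_rpow, Real.exp_neg,
      div_eq_mul_inv, mul_comm]
  rw [h0, h4]
  calc Real.exp (-x) * x ^ x = ∫ t in Ioi x, Real.exp (-t) * x ^ x := h3.symm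
    _ ≤ _ := h2.trans h1

lemma key_ineq (d : ℕ) (hd : 2 ≤ d) :
    Real.sqrt π ^ d / Real.Gamma (d / 2 + 1) ≤
      (2 * Real.exp 1 * π / d) ^ ((d : ℝ) / 2) := by
  have hd0 : (0:ℝ) < d := by positivity
  set x : ℝ := (d : ℝ) / 2 with hxdef
  have hx : 0 < x := by positivity
  have hsq : Real.sqrt π ^ d = π ^ x := by
    rw [Real.sqrt_eq_rpow, ← Real.rpow_natCast (π ^ (1/2 : ℝ)) d, ← Real.rpow_mul pi_pos.le]
    congr 1; rw [hxdef]; ring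
  have hG : (x / Real.exp 1) ^ x ≤ Real.Gamma (x + 1) := gamma_lb hx
  have hxe : (0:ℝ) < (x / Real.exp 1) ^ x := Real.rpow_pos_of_pos (by positivity) _
  have h1 : π ^ x / Real.Gamma (x + 1) ≤ π ^ x / (x / Real.exp 1) ^ x :=
    div_le_div_of_nonneg_left (Real.rpow_pos_of_pos pi_pos _).le hxe hG
  have h2 : π ^ x / (x / Real.exp 1) ^ x = (2 * Real.exp 1 * π / d) ^ x := by
    rw [← Real.div_rpow pi_pos.le (by positivity)]
    congr 1
    field_simp [hxdef]
    ring
  calc Real.sqrt π ^ d / Real.Gamma ((d:ℝ) / 2 + 1) = π ^ x / Real.Gamma (x + 1) := by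
        rw [hsq]
    _ ≤ _ := h1.trans_eq h2

/-- **Maximum intersection number of regular simplicial partitions.**
Let `d ≥ 2`, `η > 0`, and let `S : ι → Affine.Simplex _ _ d` be a finite family of
(nondegenerate) `d`-simplices in `ℝ^d` whose interiors are pairwise disjoint.
If every simplex satisfies the regularity condition `vol(S i) ≥ η * h(S i)^d`
(where `h` is the longest edge length), then every point `γ₀` lies in at most
`(1/η) * (2*e*π/d)^(d/2)` of the simplices. -/
theorem max_intersection_number_of_regular_simplices
    (d : ℕ) (hd : 2 ≤ d) (η : ℝ) (hη : 0 < η)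
    (ι : Type*) [Fintype ι]
    (S : ι → Affine.Simplex ℝ (EuclideanSpace ℝ (Fin d)) d)
    (hdisj : ∀ i j : ι, i ≠ j →
      interior (convexHull ℝ (Set.range (S i).points)) ∩
        interior (convexHull ℝ (Set.range (S j).points)) = ∅)
    (hreg : ∀ i : ι,
      η * (⨆ a : Fin (d + 1), ⨆ b : Fin (d + 1),
              dist ((S i).points a) ((S i).points b)) ^ d ≤
        (volume (convexHull ℝ (Set.range (S i).points))).toReal)
    (γ₀ : EuclideanSpace ℝ (Fin d)) :
    ({i : ι | γ₀ ∈ convexHull ℝ (Set.range (S i).points)}.ncard : ℝ) ≤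
      (1 / η) * ((2 * Real.exp 1 * Real.pi / d) ^ ((d : ℝ) / 2)) := by
  classical
  set hull : ι → Set (EuclideanSpace ℝ (Fin d)) :=
    fun i => convexHull ℝ (Set.range (S i).points) with hhull
  set h : ι → ℝ := fun i => ⨆ a : Fin (d + 1), ⨆ b : Fin (d + 1),
      dist ((S i).points a) ((S i).points b) with hh
  have hRHSpos : 0 < (2 * Real.exp 1 * Real.pi / d) ^ ((d : ℝ) / 2) := by
    apply Real.rpow_pos_of_pos
    have : (0:ℝ) < d := by positivity
    positivity
  -- distance between any two vertices is at most h i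
  have hdist_le : ∀ i a b, dist ((S i).points a) ((S i).points b) ≤ h i := by
    intro i a b
    calc dist ((S i).points a) ((S i).points b)
        ≤ ⨆ b, dist ((S i).points a) ((S i).points b) :=
          le_ciSup (f := fun b => dist ((S i).points a) ((S i).points b))
            (Set.finite_range _).bddAbove b
      _ ≤ h i := le_ciSup (f := fun a => ⨆ b, dist ((S i).points a) ((S i).points b))
          (Set.finite_range _).bddAbove a
  have hh_nonneg : ∀ i, 0 ≤ h i := fun i => le_trans dist_nonneg (hdist_le i 0 0)
  have hh_pos : ∀ i, 0 < h i := by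
    intro i
    have h01 : (⟨0, by omega⟩ : Fin (d+1)) ≠ ⟨1, by omega⟩ := by simp [Fin.ext_iff]
    have := (S i).independent.injective.ne h01
    exact lt_of_lt_of_le (dist_pos.2 this) (hdist_le i _ _)
  -- points of hull are within h i of γ₀ when γ₀ ∈ hull i
  have hhull_cpt : ∀ i, IsCompact (hull i) := fun i =>
    (Set.finite_range _).isCompact_convexHull ℝ
  have hmem_dist : ∀ i, γ₀ ∈ hull i → ∀ y ∈ hull i, dist y γ₀ ≤ h i := by
    intro i hγ y hy
    have h1 : dist y γ₀ ≤ Metric.diam (hull i) :=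
      Metric.dist_le_diam_of_mem (hhull_cpt i).isBounded hy hγ
    have h2 : Metric.diam (hull i) = Metric.diam (Set.range (S i).points) :=
      convexHull_diam _
    have h3 : Metric.diam (Set.range (S i).points) ≤ h i := by
      apply Metric.diam_le_of_forall_dist_le (hh_nonneg i)
      rintro x ⟨a, rfl⟩ y ⟨b, rfl⟩
      exact hdist_le i a b
    linarith
  set T : Finset ι := Finset.univ.filter (fun i => γ₀ ∈ hull i) with hT
  have hncard : ({i : ι | γ₀ ∈ convexHull ℝ (Set.range (S i).points)}.ncard : ℝ)
      = (T.card : ℝ) := by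
    congr 1
    rw [show {i : ι | γ₀ ∈ convexHull ℝ (Set.range (S i).points)} = (T : Set ι) by
      ext i; simp [hT, hhull]]
    exact Set.ncard_coe_finset _
  rw [hncard]
  rcases T.eq_empty_or_nonempty with hTe | hTne
  · rw [hTe]; simp; positivity
  set r : ℝ := T.inf' hTne h with hr
  have hr_pos : 0 < r := by
    rw [hr, Finset.lt_inf'_iff]; exact fun i _ => hh_pos i
  have hr_le : ∀ i ∈ T, r ≤ h i := fun i hi => Finset.inf'_le _ hi
  set c : ι → ℝ := fun i => r / h i with hc
  have hc_pos : ∀ i, 0 < c i := fun i => div_pos hr_pos (hh_pos i)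
  have hc_le_one : ∀ i ∈ T, c i ≤ 1 := fun i hi =>
    (div_le_one (hh_pos i)).2 (hr_le i hi)
  set K : ι → Set (EuclideanSpace ℝ (Fin d)) :=
    fun i => AffineMap.homothety γ₀ (c i) '' hull i with hK
  -- K i ⊆ hull i for i ∈ T
  have hKsub : ∀ i ∈ T, K i ⊆ hull i := by
    intro i hi z hz
    obtain ⟨y, hy, rfl⟩ := hz
    have hγ : γ₀ ∈ hull i := by simpa [hT] using hi
    have : AffineMap.homothety γ₀ (c i) y = (c i) • y + (1 - c i) • γ₀ := by
      simp [AffineMap.homothety_apply, vsub_eq_sub, vadd_eq_add, smul_sub]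
      module
    rw [this]
    exact (convex_convexHull ℝ _) hy hγ (hc_pos i).le (by linarith [hc_le_one i hi])
      (by ring)
  -- K i ⊆ closedBall γ₀ r for i ∈ T
  have hKball : ∀ i ∈ T, K i ⊆ Metric.closedBall γ₀ r := by
    intro i hi z hz
    obtain ⟨y, hy, rfl⟩ := hz
    have hγ : γ₀ ∈ hull i := by simpa [hT] using hi
    have hdy : dist y γ₀ ≤ h i := hmem_dist i hγ y hy
    have : dist (AffineMap.homothety γ₀ (c i) y) γ₀ = c i * dist y γ₀ := by
      simp [AffineMap.homothety_apply, vsub_eq_sub, vadd_eq_add, dist_eq_norm,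
        norm_smul, abs_of_pos (hc_pos i)]
    rw [Metric.mem_closedBall, this]
    calc c i * dist y γ₀ ≤ c i * h i := by
          exact mul_le_mul_of_nonneg_left hdy (hc_pos i).le
      _ = r := by simp only [hc]; exact div_mul_cancel₀ r (hh_pos i).ne'
  -- volume of K i
  have hKvol : ∀ i, volume (K i) = ENNReal.ofReal ((c i) ^ d) * volume (hull i) := by
    intro i
    rw [hK]
    rw [Measure.addHaar_image_homothety]
    congr 2
    rw [finrank_euclideanSpace_fin]
    exact abs_of_pos (pow_pos (hc_pos i) d)
  -- volume of K i at least η r^d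
  have hKlower : ∀ i ∈ T, ENNReal.ofReal (η * r ^ d) ≤ volume (K i) := by
    intro i hi
    rw [hKvol i]
    have h1 : ENNReal.ofReal (η * (h i) ^ d) ≤ volume (hull i) :=
      ENNReal.ofReal_le_of_le_toReal (hreg i)
    calc ENNReal.ofReal (η * r ^ d)
        = ENNReal.ofReal ((c i) ^ d * (η * (h i) ^ d)) := by
          congr 1
          have : c i * h i = r := by simp only [hc]; exact div_mul_cancel₀ r (hh_pos i).ne'
          calc η * r ^ d = η * (c i * h i) ^ d := by rw [this]
            _ = (c i) ^ d * (η * (h i) ^ d) := by ring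
      _ = ENNReal.ofReal ((c i) ^ d) * ENNReal.ofReal (η * (h i) ^ d) := by
          rw [ENNReal.ofReal_mul (pow_pos (hc_pos i) d).le]
      _ ≤ ENNReal.ofReal ((c i) ^ d) * volume (hull i) := by
          exact mul_le_mul_right h1 _
  -- vol K i = vol interior K i
  have hKint : ∀ i ∈ T, volume (K i) = volume (interior (K i)) := by
    intro i hi
    refine le_antisymm ?_ (measure_mono interior_subset)
    have hconv : Convex ℝ (K i) :=
      ((convex_convexHull ℝ _).affine_image _)
    calc volume (K i) ≤ volume (interior (K i) ∪ frontier (K i)) := by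
          apply measure_mono
          rw [← closure_eq_interior_union_frontier]
          exact subset_closure
      _ ≤ volume (interior (K i)) + volume (frontier (K i)) := measure_union_le _ _
      _ = volume (interior (K i)) := by
          rw [hconv.addHaar_frontier volume, add_zero]
  -- interiors disjoint
  have hKdisj : (T : Set ι).Pairwise (Function.onFun Disjoint fun i => interior (K i)) := by
    intro i hi j hj hij
    have h1 : interior (K i) ⊆ interior (hull i) := interior_mono (hKsub i hi)
    have h2 : interior (K j) ⊆ interior (hull j) := interior_mono (hKsub j hj)
    have := hdisj i j hij
    rw [Function.onFun, Set.disjoint_iff_inter_eq_empty]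
    apply Set.eq_empty_of_subset_empty
    calc interior (K i) ∩ interior (K j) ⊆ interior (hull i) ∩ interior (hull j) :=
          Set.inter_subset_inter h1 h2
      _ = ∅ := this
  -- sum up
  haveI : Nonempty (Fin d) := ⟨⟨0, by omega⟩⟩
  have hsum : (T.card : ℝ≥0∞) * ENNReal.ofReal (η * r ^ d)
      ≤ volume (Metric.closedBall γ₀ r) := by
    calc (T.card : ℝ≥0∞) * ENNReal.ofReal (η * r ^ d)
        = ∑ i ∈ T, ENNReal.ofReal (η * r ^ d) := by
          rw [Finset.sum_const, nsmul_eq_mul]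
      _ ≤ ∑ i ∈ T, volume (interior (K i)) := by
          apply Finset.sum_le_sum
          intro i hi
          rw [← hKint i hi]
          exact hKlower i hi
      _ = volume (⋃ i ∈ T, interior (K i)) := by
          rw [measure_biUnion_finset hKdisj (fun i _ => isOpen_interior.measurableSet)]
      _ ≤ volume (Metric.closedBall γ₀ r) := by
          apply measure_mono
          intro z hz
          simp only [Set.mem_iUnion] at hz
          obtain ⟨i, hi, hzi⟩ := hz
          exact hKball i hi (interior_subset hzi)
  have hball : volume (Metric.closedBall γ₀ r) =
      ENNReal.ofReal (r ^ d * (Real.sqrt π ^ d / Real.Gamma (d / 2 + 1))) := by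
    rw [EuclideanSpace.volume_closedBall, Fintype.card_fin]
    rw [← ENNReal.ofReal_pow hr_pos.le, ← ENNReal.ofReal_mul (by positivity)]
  have hΓpos : 0 < Real.Gamma ((d:ℝ) / 2 + 1) := Real.Gamma_pos_of_pos (by positivity)
  have hreal : (T.card : ℝ) * (η * r ^ d)
      ≤ r ^ d * (Real.sqrt π ^ d / Real.Gamma (d / 2 + 1)) := by
    have hC : (0:ℝ) ≤ Real.sqrt π ^ d / Real.Gamma (d / 2 + 1) :=
      div_nonneg (pow_nonneg (Real.sqrt_nonneg _) _) hΓpos.le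
    rw [← ENNReal.ofReal_le_ofReal_iff (mul_nonneg (pow_pos hr_pos d).le hC)]
    calc ENNReal.ofReal ((T.card : ℝ) * (η * r ^ d))
        = (T.card : ℝ≥0∞) * ENNReal.ofReal (η * r ^ d) := by
          rw [ENNReal.ofReal_mul (Nat.cast_nonneg _), ENNReal.ofReal_natCast]
      _ ≤ _ := hsum.trans_eq hball
  have hrd : (0:ℝ) < r ^ d := pow_pos hr_pos d
  have hcard : (T.card : ℝ) ≤ (1 / η) * (Real.sqrt π ^ d / Real.Gamma (d / 2 + 1)) := by
    rw [div_mul_eq_mul_div, le_div_iff₀ hη, one_mul]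
    nlinarith [hreal, hrd]
  calc (T.card : ℝ) ≤ (1 / η) * (Real.sqrt π ^ d / Real.Gamma (d / 2 + 1)) := hcard
    _ ≤ (1 / η) * ((2 * Real.exp 1 * Real.pi / d) ^ ((d : ℝ) / 2)) := by
        apply mul_le_mul_of_nonneg_left (key_ineq d hd) (by positivity)
end

section
/- Let d ≥ 2 and let S be a d-simplex in ℝ^d having the origin 0 as one of its vertices. Then for every t > 0, the Gaussian integral over the cone generated by S satisfies ∫_{cone(S)} e^{−‖γ‖²} dγ ≥ t^d · vol(S) · e^{−t² · dia(S)²}, where cone(S) = { t'·γ' : t' ≥ 0, γ' ∈ S } is the cone over S with apex at the origin, vol(S) is the d-dimensional Lebesgue measure of the convex hull of S, and dia(S) is the diameter of the convex hull of S. -/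
open MeasureTheory Set Pointwise

/-- **Lower bound for the Gaussian integral over the cone generated by a simplex.**
Let `d ≥ 2` and let `S` be a `d`-simplex in `ℝ^d` having the origin as one of its vertices.
Then for every `t > 0`,
`∫_{cone(S)} e^{-‖γ‖²} dγ ≥ t^d * vol(S) * e^{-t² * dia(S)²}`,
where `cone(S) = {t' • γ' : t' ≥ 0, γ' ∈ convexHull S}`. -/
theorem gaussian_integral_cone_lower_bound
    (d : ℕ) (hd : 2 ≤ d)
    (S : Affine.Simplex ℝ (EuclideanSpace ℝ (Fin d)) d)
    (h0 : ∃ i : Fin (d + 1), S.points i = 0)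
    (t : ℝ) (ht : 0 < t) :
    t ^ d * (volume (convexHull ℝ (Set.range S.points))).toReal *
        Real.exp (-t ^ 2 * Metric.diam (convexHull ℝ (Set.range S.points)) ^ 2) ≤
      ∫ γ in {x : EuclideanSpace ℝ (Fin d) |
          ∃ t' : ℝ, 0 ≤ t' ∧ ∃ γ' ∈ convexHull ℝ (Set.range S.points), x = t' • γ'},
        Real.exp (-‖γ‖ ^ 2) := by
  set E := EuclideanSpace ℝ (Fin d)
  set K := convexHull ℝ (Set.range S.points) with hK
  set C := {x : E | ∃ t' : ℝ, 0 ≤ t' ∧ ∃ γ' ∈ K, x = t' • γ'}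
  obtain ⟨i, hi⟩ := h0
  have h0K : (0 : E) ∈ K := by
    rw [← hi]; exact subset_convexHull ℝ _ ⟨i, rfl⟩
  have hKcpt : IsCompact K := (Set.finite_range S.points).isCompact_convexHull ℝ
  have htKcpt : IsCompact (t • K) := hKcpt.smul t
  have hmeas : MeasurableSet (t • K) := htKcpt.measurableSet
  have hint : Integrable (fun v : E => Real.exp (-‖v‖ ^ 2)) := by
    have h := (GaussianFourier.integrable_cexp_neg_mul_sq_norm_add (V := E)
      (b := 1) (by norm_num) 0 0).norm
    convert h using 2 with v
    simp [Complex.norm_exp]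
    norm_cast
  have hsub : t • K ⊆ C := by
    rintro y ⟨x, hx, rfl⟩
    exact ⟨t, ht.le, x, hx, rfl⟩
  set D := Metric.diam K
  have hbound : ∀ y ∈ t • K, Real.exp (-t ^ 2 * D ^ 2) ≤ Real.exp (-‖y‖ ^ 2) := by
    rintro y ⟨x, hx, rfl⟩
    apply Real.exp_le_exp.2
    have hxD : ‖x‖ ≤ D := by
      have := Metric.dist_le_diam_of_mem hKcpt.isBounded hx h0K
      simpa using this
    have : ‖t • x‖ ^ 2 ≤ t ^ 2 * D ^ 2 := by
      rw [norm_smul, mul_pow, Real.norm_eq_abs, sq_abs]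
      gcongr
    linarith
  have hvol : (volume (t • K)).toReal = t ^ d * (volume K).toReal := by
    rw [Measure.addHaar_smul]
    rw [ENNReal.toReal_mul, ENNReal.toReal_ofReal (by positivity)]
    simp [abs_of_pos ht]
  calc t ^ d * (volume K).toReal * Real.exp (-t ^ 2 * D ^ 2)
      = ∫ _ in t • K, Real.exp (-t ^ 2 * D ^ 2) := by
        rw [setIntegral_const, measureReal_def, hvol, smul_eq_mul]
    _ ≤ ∫ y in t • K, Real.exp (-‖y‖ ^ 2) := by
        apply setIntegral_mono_on (integrableOn_const htKcpt.measure_lt_top.ne)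
          (hint.integrableOn) hmeas hbound
    _ ≤ ∫ y in C, Real.exp (-‖y‖ ^ 2) := by
        apply setIntegral_mono_set hint.integrableOn
          (Filter.Eventually.of_forall fun x => (Real.exp_pos _).le)
          (HasSubset.Subset.eventuallyLE hsub)
end

section
/- Let d ≥ 2, let η > 0, and let S be a d-simplex in ℝ^d having the origin 0 as one of its vertices and satisfying the regularity condition vol(S) ≥ η · h(S)^d, where h(S) is the length of the longest edge of S. Then the Gaussian integral over the cone generated by S satisfies ∫_{cone(S)} e^{−‖γ‖²} dγ ≥ η · (d/2)^{d/2} · e^{−d/2}, where cone(S) = { t·γ' : t ≥ 0, γ' ∈ S }. -/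
open MeasureTheory Set Pointwise

/-- **Uniform lower bound for the Gaussian integral over the cone of a regular simplex.**
Let `d ≥ 2`, `η > 0`, and let `S` be a `d`-simplex in `ℝ^d` having the origin as a vertex and
satisfying the regularity condition `vol(S) ≥ η * h(S)^d`, where `h(S)` is the longest edge
length. Then `∫_{cone(S)} e^{-‖γ‖²} dγ ≥ η * (d/2)^(d/2) * e^{-d/2}`. -/
theorem gaussian_integral_cone_regular_lower_bound
    (d : ℕ) (hd : 2 ≤ d) (η : ℝ) (hη : 0 < η)
    (S : Affine.Simplex ℝ (EuclideanSpace ℝ (Fin d)) d)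
    (h0 : ∃ i : Fin (d + 1), S.points i = 0)
    (hreg : η * (⨆ i : Fin (d + 1), ⨆ j : Fin (d + 1),
          dist (S.points i) (S.points j)) ^ d ≤
        (volume (convexHull ℝ (Set.range S.points))).toReal) :
    η * ((d : ℝ) / 2) ^ ((d : ℝ) / 2) * Real.exp (-(d : ℝ) / 2) ≤
      ∫ γ in {x : EuclideanSpace ℝ (Fin d) |
          ∃ t : ℝ, 0 ≤ t ∧ ∃ γ' ∈ convexHull ℝ (Set.range S.points), x = t • γ'},
        Real.exp (-‖γ‖ ^ 2) := by
  obtain ⟨i0, hi0⟩ := h0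
  set K := convexHull ℝ (Set.range S.points) with hKdef
  set h : ℝ := ⨆ i : Fin (d + 1), ⨆ j : Fin (d + 1), dist (S.points i) (S.points j) with hhdef
  have hdist_le : ∀ i j, dist (S.points i) (S.points j) ≤ h := by
    intro i j
    have h1 : dist (S.points i) (S.points j) ≤ ⨆ j, dist (S.points i) (S.points j) :=
      le_ciSup (f := fun j => dist (S.points i) (S.points j))
        (Set.Finite.bddAbove (Set.finite_range _)) j
    have h2 : (⨆ j, dist (S.points i) (S.points j)) ≤ h :=
      le_ciSup (f := fun i => ⨆ j, dist (S.points i) (S.points j))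
        (Set.Finite.bddAbove (Set.finite_range _)) i
    exact h1.trans h2
  -- h > 0
  have hinj : Function.Injective S.points := S.independent.injective
  have : Nontrivial (Fin (d + 1)) :=
    ⟨⟨0, by omega⟩, ⟨1, by omega⟩, by simp [Fin.ext_iff]⟩
  obtain ⟨j, hj⟩ : ∃ j : Fin (d + 1), j ≠ i0 := exists_ne i0
  have hpos : 0 < h :=
    lt_of_lt_of_le (dist_pos.2 fun e => hj (hinj e)) (hdist_le j i0)
  -- K ⊆ closedBall 0 h
  have hKball : K ⊆ Metric.closedBall 0 h := by
    refine convexHull_min ?_ (convex_closedBall _ _)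
    rintro x ⟨i, rfl⟩
    simpa [Metric.mem_closedBall, ← hi0] using hdist_le i i0
  have hKc : IsCompact K := (Set.finite_range S.points).isCompact_convexHull (𝕜 := ℝ)
  set r : ℝ := Real.sqrt ((d : ℝ) / 2) / h with hrdef
  have hr0 : 0 ≤ r := div_nonneg (Real.sqrt_nonneg _) hpos.le
  have hrh : r * h = Real.sqrt ((d : ℝ) / 2) := div_mul_cancel₀ _ hpos.ne'
  set T : Set (EuclideanSpace ℝ (Fin d)) := r • K with hTdef
  have hTc : IsCompact T := hKc.smul r
  have hTm : MeasurableSet T := hTc.isClosed.measurableSet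
  set C : Set (EuclideanSpace ℝ (Fin d)) :=
    {x | ∃ t : ℝ, 0 ≤ t ∧ ∃ γ' ∈ K, x = t • γ'} with hCdef
  have hTC : T ⊆ C := by
    rintro x ⟨y, hy, rfl⟩
    exact ⟨r, hr0, y, hy, rfl⟩
  -- integrability
  have hint : Integrable (fun γ : EuclideanSpace ℝ (Fin d) => Real.exp (-‖γ‖ ^ 2)) := by
    have := (GaussianFourier.integrable_cexp_neg_mul_sq_norm_add
      (V := EuclideanSpace ℝ (Fin d)) (b := 1) (by norm_num) 0 0).norm
    convert this using 2 with γ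
    simp [Complex.norm_exp, ← Complex.ofReal_pow]
  have hnonneg : ∀ x : EuclideanSpace ℝ (Fin d), 0 ≤ Real.exp (-‖x‖ ^ 2) :=
    fun x => (Real.exp_pos _).le
  -- norm bound on T
  have hTnorm : ∀ x ∈ T, Real.exp (-(d : ℝ) / 2) ≤ Real.exp (-‖x‖ ^ 2) := by
    rintro x ⟨y, hy, rfl⟩
    have hyh : ‖y‖ ≤ h := by simpa using hKball hy
    have : ‖r • y‖ ≤ Real.sqrt ((d : ℝ) / 2) := by
      rw [norm_smul, Real.norm_of_nonneg hr0, ← hrh]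
      exact mul_le_mul_of_nonneg_left hyh hr0
    have h2 : ‖r • y‖ ^ 2 ≤ (d : ℝ) / 2 := by
      calc ‖r • y‖ ^ 2 ≤ Real.sqrt ((d : ℝ) / 2) ^ 2 := by
            exact pow_le_pow_left₀ (norm_nonneg _) this 2
        _ = (d : ℝ) / 2 := Real.sq_sqrt (by positivity)
    exact Real.exp_le_exp.2 (by linarith)
  -- volume of T
  have hvolT : (volume T).toReal = r ^ d * (volume K).toReal := by
    rw [hTdef, Measure.addHaar_smul_of_nonneg volume hr0 K, ENNReal.toReal_mul,
      ENNReal.toReal_ofReal (by positivity), finrank_euclideanSpace_fin]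
  have hKfin : volume K ≠ ⊤ := hKc.measure_lt_top.ne
  have hTfin : volume T ≠ ⊤ := hTc.measure_lt_top.ne
  -- main chain
  have step1 : Real.exp (-(d : ℝ) / 2) * (volume T).toReal ≤
      ∫ γ in T, Real.exp (-‖γ‖ ^ 2) :=
    setIntegral_ge_of_const_le_real hTm hTfin hTnorm hint.integrableOn
  have step2 : ∫ γ in T, Real.exp (-‖γ‖ ^ 2) ≤ ∫ γ in C, Real.exp (-‖γ‖ ^ 2) :=
    setIntegral_mono_set hint.integrableOn
      (Filter.Eventually.of_forall fun x => hnonneg x) (HasSubset.Subset.eventuallyLE hTC)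
  have hvol_lb : η * ((d : ℝ) / 2) ^ ((d : ℝ) / 2) ≤ (volume T).toReal := by
    rw [hvolT]
    have : η * ((d : ℝ) / 2) ^ ((d : ℝ) / 2) = r ^ d * (η * h ^ d) := by
      rw [show r ^ d * (η * h ^ d) = η * (r * h) ^ d by ring]
      rw [hrh, Real.sqrt_eq_rpow, ← Real.rpow_natCast (((d : ℝ) / 2) ^ ((1:ℝ)/2)) d,
        ← Real.rpow_mul (by positivity)]
      congr 1
      ring
    rw [this]
    exact mul_le_mul_of_nonneg_left hreg (by positivity)
  calc η * ((d : ℝ) / 2) ^ ((d : ℝ) / 2) * Real.exp (-(d : ℝ) / 2)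
      ≤ Real.exp (-(d : ℝ) / 2) * (volume T).toReal := by
        rw [mul_comm]
        exact mul_le_mul_of_nonneg_left hvol_lb (Real.exp_pos _).le
    _ ≤ ∫ γ in T, Real.exp (-‖γ‖ ^ 2) := step1
    _ ≤ ∫ γ in C, Real.exp (-‖γ‖ ^ 2) := step2
end
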